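/- arXiv:1102.0173 — 3 statements merged into one kernel-verified Lean document; each statement's English description precedes it below -/
import Mathlib

section
/- For every rational number p with 0 ≤ p ≤ 1, there exists a (randomized) announcement procedure on uniformly random families in {B,G}² such that the conditional probability of two boys given the announcement 'at least one is a boy' equals p. -/
inductive Gender | B | G deriving DecidableEq

instance : Fintype Gender := ⟨{Gender.B, Gender.G}, fun x => by cases x <;> simp⟩

/-- For every rational `p ∈ [0,1]` there is a randomized announcement procedure
(`q f` = probability that family `f` says "at least one is a boy", with `q (G,G) = 0`)
such that the conditional probability of two boys given the announcement equals `p`. -/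
theorem stmt_5 (p : ℚ) (hp0 : 0 ≤ p) (hp1 : p ≤ 1) :
    ∃ q : Gender × Gender → ℚ,
      (∀ f, 0 ≤ q f ∧ q f ≤ 1) ∧
      q (Gender.G, Gender.G) = 0 ∧
      0 < ∑ f : Gender × Gender, q f ∧
      (∑ f ∈ Finset.univ.filter (fun f : Gender × Gender =>
          f.1 = Gender.B ∧ f.2 = Gender.B), q f) / (∑ f : Gender × Gender, q f) = p := by
  refine ⟨fun f => if f = (Gender.B, Gender.B) then p else if f = (Gender.B, Gender.G) then 1 - p else 0, ?_, ?_, ?_, ?_⟩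
  · rintro ⟨a, b⟩ <;> cases a <;> cases b <;> simp <;> constructor <;> linarith
  · simp
  · rw [show Finset.univ = ({(Gender.B, Gender.B), (Gender.B, Gender.G), (Gender.G, Gender.B), (Gender.G, Gender.G)} : Finset (Gender × Gender)) by decide]
    rw [Finset.sum_insert (by decide), Finset.sum_insert (by decide), Finset.sum_insert (by decide), Finset.sum_singleton]
    simp
  · rw [show Finset.univ = ({(Gender.B, Gender.B), (Gender.B, Gender.G), (Gender.G, Gender.B), (Gender.G, Gender.G)} : Finset (Gender × Gender)) by decide]
    rw [Finset.sum_insert (by decide), Finset.sum_insert (by decide), Finset.sum_insert (by decide), Finset.sum_singleton]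
    simp [Finset.filter_insert, Finset.filter_singleton]
end

section
/- In the gender-neutral, day-neutral procedure, where a uniformly random child of a uniformly random family in ({B,G} × Fin 7)² is announced with its gender and birth day, the conditional probability of two boys given the announcement '(B, Tuesday)' equals 1/2. -/
/-- A child is a (gender, weekday) pair; a family is a pair of children. -/
abbrev Child := Gender × Fin 7
abbrev Family := Child × Child

/-- Conditional probability under the uniform distribution on a finite type. -/
def condProb {α : Type*} [Fintype α] (A E : α → Prop) [DecidablePred A] [DecidablePred E] : ℚ :=
  ((Finset.univ.filter fun s => A s ∧ E s).card : ℚ) / ((Finset.univ.filter E).card : ℚ)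

/-- The announced child (gender, day): the coin picks which child. -/
def announced (x : Family × Bool) : Child :=
  if x.2 then x.1.1 else x.1.2

set_option maxRecDepth 4000 in
theorem stmt_8 (t : Fin 7) :
    condProb (fun x : Family × Bool => x.1.1.1 = Gender.B ∧ x.1.2.1 = Gender.B)
      (fun x => announced x = (Gender.B, t)) = 1 / 2 := by
  have hA : (Finset.univ.filter fun x : Family × Bool =>
      (x.1.1.1 = Gender.B ∧ x.1.2.1 = Gender.B) ∧ announced x = (Gender.B, t)).card = 14 := by
    fin_cases t <;> decide
  have hE : (Finset.univ.filter fun x : Family × Bool =>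
      announced x = (Gender.B, t)).card = 28 := by
    fin_cases t <;> decide
  unfold condProb
  rw [hA, hE]
  norm_num
end

section
/- In the gender-neutral, Tuesday-centered procedure, where among families with at least one child born on Tuesday a uniformly random Tuesday-born child's gender is announced, the conditional probability of two boys given the announcement 'boy born on Tuesday' equals 1/2. -/
/-- Tuesday-centered gender announcement: among children born on day t, a
uniformly chosen one (the coin decides if both qualify) has its gender announced. -/
def tGender (t : Fin 7) (x : Family × Bool) : Option Gender :=
  if x.1.1.2 = t ∧ x.1.2.2 = t then some (if x.2 then x.1.1.1 else x.1.2.1)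
  else if x.1.1.2 = t then some x.1.1.1
  else if x.1.2.2 = t then some x.1.2.1
  else none


set_option maxRecDepth 40000 in
lemma stmt_10_key (t : Fin 7)
    (h1 : (Finset.univ.filter fun x : Family × Bool =>
        (x.1.1.1 = Gender.B ∧ x.1.2.1 = Gender.B) ∧ tGender t x = some Gender.B).card = 26)
    (h2 : (Finset.univ.filter fun x : Family × Bool =>
        tGender t x = some Gender.B).card = 52) :
    condProb (fun x : Family × Bool => x.1.1.1 = Gender.B ∧ x.1.2.1 = Gender.B)
      (fun x => tGender t x = some Gender.B) = 1 / 2 := by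
  rw [condProb, h1, h2]; norm_num

set_option maxRecDepth 40000 in
theorem stmt_10 (t : Fin 7) :
    condProb (fun x : Family × Bool => x.1.1.1 = Gender.B ∧ x.1.2.1 = Gender.B)
      (fun x => tGender t x = some Gender.B) = 1 / 2 := by fin_cases t <;> exact stmt_10_key _ (by decide) (by decide)
end
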